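/- For every integer m > 1 there exist constants C > 0 and c > 0 (depending only on m) such that in the random uniform attachment graph process with degree cap d = 2m, for every vertex v and every n ≥ v, the probability that v has degree strictly less than d in G_n is at most C·e^{−c(n−v)}. -/

import Mathlib

open Finset MeasureTheory Filter Topology FirstOrder
open scoped ENNReal

noncomputable section

open scoped Classical

/-- The degree of vertex `v` in the graph `g`, counting neighbors among `{1, …, n}`. -/
def degIn (g : SimpleGraph ℕ) (n v : ℕ) : ℕ :=
  ((Finset.Icc 1 n).filter fun u => g.Adj v u).card

/-- The set of neighbors of vertex `v` in the graph `g` among `{1, …, n}`. -/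
def nbrsIn (g : SimpleGraph ℕ) (n v : ℕ) : Finset ℕ :=
  (Finset.Icc 1 n).filter fun u => g.Adj v u

/-- `g'` is obtained from `g` (a graph on `{1,…,n}`) by one admissible uniform-attachment
step with parameter `m` and degree cap `d = 2m`: the new vertex `n+1` is joined to `m`
distinct vertices of `{1,…,n}`, each of degree `< 2m` in `g`; adjacencies among the other
vertices are unchanged, and all edges of `g'` stay inside `{1,…,n+1}`. -/
def IsUAStep (m n : ℕ) (g g' : SimpleGraph ℕ) : Prop :=
  (∀ u v, g'.Adj u v → u ∈ Finset.Icc 1 (n+1) ∧ v ∈ Finset.Icc 1 (n+1)) ∧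
  (∀ u v, u ≠ n+1 → v ≠ n+1 → (g'.Adj u v ↔ g.Adj u v)) ∧
  (nbrsIn g' (n+1) (n+1)).card = m ∧
  (∀ u, g'.Adj (n+1) u → u ∈ Finset.Icc 1 n ∧ degIn g n u < 2*m)

/-- The complete graph on the vertex set `{1, …, k}` (as a graph on `ℕ`). -/
def completeOn (k : ℕ) : SimpleGraph ℕ :=
  SimpleGraph.fromRel (fun u v => u ∈ Finset.Icc 1 k ∧ v ∈ Finset.Icc 1 k)

/-- `N(g)`: the number of `m`-element sets of vertices of degree `< 2m` of a graph `g`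
on `{1,…,n}`. -/
def numOpenSets (m n : ℕ) (g : SimpleGraph ℕ) : ℕ :=
  (((Finset.Icc 1 n).filter fun v => degIn g n v < 2*m).card).choose m

/-- The random uniform attachment graph process with parameter `m` (degree cap `d = 2m`),
modeled by random variables `G n` (for `n ≥ m+1`) on a probability space `(Ω, P)` taking
values in simple graphs on `{1,…,n}`: `G (m+1)` is a.s. the complete graph on `{1,…,m+1}`;
a.s. each `G (n+1)` is obtained from `G n` by an admissible uniform attachment step; and
for every graph `g` on `{1,…,n}` and every `m`-element set `S` of vertices of degree `< 2m`
of `g`, `P(G n = g and the neighborhood of n+1 in G (n+1) equals S) = P(G n = g) / N(g)`. -/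
structure UAProcess (m : ℕ) {Ω : Type} [MeasurableSpace Ω] (P : Measure Ω) where
  G : ℕ → Ω → SimpleGraph ℕ
  meas : ∀ n H, MeasurableSet {ω | G n ω = H}
  init : P {ω | G (m+1) ω = completeOn (m+1)} = 1
  stepAdm : ∀ n, m+1 ≤ n → P {ω | IsUAStep m n (G n ω) (G (n+1) ω)} = 1
  stepUnif : ∀ n, m+1 ≤ n → ∀ g : SimpleGraph ℕ,
    (∀ u v, g.Adj u v → u ∈ Finset.Icc 1 n ∧ v ∈ Finset.Icc 1 n) →
    ∀ S : Finset ℕ, S.card = m →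
    (∀ v ∈ S, v ∈ Finset.Icc 1 n ∧ degIn g n v < 2*m) →
    P {ω | G n ω = g ∧ nbrsIn (G (n+1) ω) (n+1) (n+1) = S} =
      P {ω | G n ω = g} / (numOpenSets m n g : ℝ≥0∞)


def suppOn (n : ℕ) (g : SimpleGraph ℕ) : Prop :=
  ∀ u v, g.Adj u v → u ∈ Finset.Icc 1 n ∧ v ∈ Finset.Icc 1 n

lemma finite_suppOn (n : ℕ) : {g : SimpleGraph ℕ | suppOn n g}.Finite := by
  have hinj : Set.InjOn (fun g : SimpleGraph ℕ =>
      (Finset.Icc 1 n ×ˢ Finset.Icc 1 n).filter (fun p => g.Adj p.1 p.2))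
      {g | suppOn n g} := by
    intro g hg g' hg' h
    dsimp only at h
    ext u v
    constructor
    · intro hadj
      have hu := hg u v hadj
      have hmem : (u, v) ∈ (Finset.Icc 1 n ×ˢ Finset.Icc 1 n).filter
          (fun p => g.Adj p.1 p.2) := by
        simp only [Finset.mem_filter, Finset.mem_product]
        exact ⟨⟨hu.1, hu.2⟩, hadj⟩
      rw [h] at hmem
      exact (Finset.mem_filter.1 hmem).2
    · intro hadj
      have hu := hg' u v hadj
      have hmem : (u, v) ∈ (Finset.Icc 1 n ×ˢ Finset.Icc 1 n).filter
          (fun p => g'.Adj p.1 p.2) := by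
        simp only [Finset.mem_filter, Finset.mem_product]
        exact ⟨⟨hu.1, hu.2⟩, hadj⟩
      rw [← h] at hmem
      exact (Finset.mem_filter.1 hmem).2
  apply Set.Finite.of_finite_image ?_ hinj
  apply Set.Finite.subset (Finset.finite_toSet ((Finset.Icc 1 n ×ˢ Finset.Icc 1 n).powerset))
  rintro _ ⟨g, _, rfl⟩
  simp only [Finset.coe_powerset, Set.mem_preimage, Set.mem_powerset_iff, Finset.coe_subset]
  exact Finset.filter_subset _ _

def graphsOn (n : ℕ) : Finset (SimpleGraph ℕ) := (finite_suppOn n).toFinset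

lemma mem_graphsOn {n : ℕ} {g : SimpleGraph ℕ} : g ∈ graphsOn n ↔ suppOn n g := by
  simp [graphsOn]

def GoodG (m n : ℕ) (g : SimpleGraph ℕ) : Prop :=
  suppOn n g ∧ (∀ u ∈ Finset.Icc 1 n, degIn g n u ≤ 2*m) ∧
  ((∑ u ∈ Finset.Icc 1 n, degIn g n u) + m*(m+1) = 2*m*n)

lemma completeOn_adj (k u v : ℕ) :
    (completeOn k).Adj u v ↔ u ≠ v ∧ u ∈ Finset.Icc 1 k ∧ v ∈ Finset.Icc 1 k := by
  simp only [completeOn, SimpleGraph.fromRel_adj]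
  tauto

lemma degIn_completeOn (k v : ℕ) (hv : v ∈ Finset.Icc 1 k) :
    degIn (completeOn k) k v = k - 1 := by
  unfold degIn
  have h : (Finset.Icc 1 k).filter (fun u => (completeOn k).Adj v u)
      = (Finset.Icc 1 k).erase v := by
    ext u
    simp only [Finset.mem_filter, Finset.mem_erase, completeOn_adj]
    constructor
    · rintro ⟨hu, hne, _, _⟩; exact ⟨fun h => hne h.symm, hu⟩
    · rintro ⟨hne, hu⟩; exact ⟨hu, fun h => hne h.symm, hv, hu⟩
  rw [h, Finset.card_erase_of_mem hv, Nat.card_Icc]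
  simp

lemma goodG_complete (m : ℕ) (hm : 1 ≤ m) : GoodG m (m+1) (completeOn (m+1)) := by
  refine ⟨?_, ?_, ?_⟩
  · intro u v h
    rw [completeOn_adj] at h
    exact ⟨h.2.1, h.2.2⟩
  · intro u hu
    rw [degIn_completeOn _ _ hu]
    omega
  · have h : ∀ u ∈ Finset.Icc 1 (m+1), degIn (completeOn (m+1)) (m+1) u = m := by
      intro u hu; rw [degIn_completeOn _ _ hu]; omega
    rw [Finset.sum_congr rfl h, Finset.sum_const, Nat.card_Icc]
    simp only [smul_eq_mul]
    have h2 : m + 1 + 1 - 1 = m + 1 := by omega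
    rw [h2]; ring

lemma Icc_succ_right' (n : ℕ) : Finset.Icc 1 (n+1) = insert (n+1) (Finset.Icc 1 n) := by
  ext x; simp only [Finset.mem_Icc, Finset.mem_insert]; omega

lemma degIn_step {m n : ℕ} {g g' : SimpleGraph ℕ} (h : IsUAStep m n g g')
    {v : ℕ} (hv : v ∈ Finset.Icc 1 n) :
    degIn g' (n+1) v = degIn g n v + (if g'.Adj (n+1) v then 1 else 0) := by
  obtain ⟨h1, h2, h3, h4⟩ := h
  have hvn : v ≤ n := (Finset.mem_Icc.1 hv).2
  unfold degIn
  rw [Icc_succ_right', Finset.filter_insert]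
  have hfil : (Finset.Icc 1 n).filter (fun u => g'.Adj v u)
      = (Finset.Icc 1 n).filter (fun u => g.Adj v u) := by
    apply Finset.filter_congr
    intro u hu
    have hun : u ≠ n+1 := by have := (Finset.mem_Icc.1 hu).2; omega
    have hvn' : v ≠ n+1 := by omega
    simpa using h2 v u hvn' hun
  have hadjc : g'.Adj v (n+1) ↔ g'.Adj (n+1) v := by
    constructor <;> exact fun h => h.symm
  by_cases hadj : g'.Adj (n+1) v
  · rw [if_pos (hadjc.2 hadj), if_pos hadj,
      Finset.card_insert_of_notMem (by simp [Finset.mem_Icc]), hfil]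
  · rw [if_neg (fun hc => hadj (hadjc.1 hc)), if_neg hadj, hfil]
    simp

lemma degIn_new {m n : ℕ} {g g' : SimpleGraph ℕ} (h : IsUAStep m n g g') :
    degIn g' (n+1) (n+1) = m := h.2.2.1

lemma nbrs_filter_eq {m n : ℕ} {g g' : SimpleGraph ℕ} (h : IsUAStep m n g g') :
    nbrsIn g' (n+1) (n+1) = (Finset.Icc 1 n).filter (fun u => g'.Adj (n+1) u) := by
  unfold nbrsIn
  rw [Icc_succ_right', Finset.filter_insert, if_neg (g'.irrefl)]

lemma nbrs_card_aux {m n : ℕ} {g g' : SimpleGraph ℕ} (h : IsUAStep m n g g') :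
    ((Finset.Icc 1 n).filter (fun u => g'.Adj (n+1) u)).card = m := by
  rw [← nbrs_filter_eq h, h.2.2.1]

lemma goodG_step {m n : ℕ} {g g' : SimpleGraph ℕ}
    (hg : GoodG m n g) (h : IsUAStep m n g g') : GoodG m (n+1) g' := by
  obtain ⟨hs, hdeg, hsum⟩ := hg
  obtain ⟨h1, h2, h3, h4⟩ := h
  have hstep : IsUAStep m n g g' := ⟨h1, h2, h3, h4⟩
  refine ⟨h1, ?_, ?_⟩
  · intro u hu
    rcases eq_or_ne u (n+1) with rfl | hune
    · rw [degIn_new hstep]; omega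
    · have hu' : u ∈ Finset.Icc 1 n := by
        simp only [Finset.mem_Icc] at hu ⊢; omega
      rw [degIn_step hstep hu']
      by_cases hadj : g'.Adj (n+1) u
      · have := (h4 u hadj).2
        rw [if_pos hadj]; omega
      · rw [if_neg hadj]
        have := hdeg u hu'; omega
  · rw [Icc_succ_right', Finset.sum_insert (by simp [Finset.mem_Icc]), degIn_new hstep]
    have hsum2 : ∑ u ∈ Finset.Icc 1 n, degIn g' (n+1) u
        = (∑ u ∈ Finset.Icc 1 n, degIn g n u) + m := by
      rw [Finset.sum_congr rfl (fun u hu => degIn_step hstep hu), Finset.sum_add_distrib]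
      congr 1
      rw [← Finset.card_filter]
      exact nbrs_card_aux hstep
    rw [hsum2]
    have : m + ((∑ u ∈ Finset.Icc 1 n, degIn g n u) + m) + m*(m+1)
        = ((∑ u ∈ Finset.Icc 1 n, degIn g n u) + m*(m+1)) + 2*m := by ring
    rw [this, hsum]
    ring

lemma open_card_le {m n : ℕ} {g : SimpleGraph ℕ} (hg : GoodG m n g) :
    ((Finset.Icc 1 n).filter (fun u => degIn g n u < 2*m)).card ≤ m*(m+1) := by
  obtain ⟨hs, hdeg, hsum⟩ := hg
  have h1 : (∑ u ∈ Finset.Icc 1 n, (2*m - degIn g n u))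
      + ∑ u ∈ Finset.Icc 1 n, degIn g n u = 2*m*n := by
    rw [← Finset.sum_add_distrib]
    have : ∀ u ∈ Finset.Icc 1 n, 2*m - degIn g n u + degIn g n u = 2*m := by
      intro u hu; have := hdeg u hu; omega
    rw [Finset.sum_congr rfl this, Finset.sum_const, Nat.card_Icc]
    simp only [smul_eq_mul]
    have hc : n + 1 - 1 = n := by omega
    rw [hc]; ring
  have h2 : (∑ u ∈ Finset.Icc 1 n, (2*m - degIn g n u)) = m*(m+1) := by omega
  calc ((Finset.Icc 1 n).filter (fun u => degIn g n u < 2*m)).card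
      = ∑ u ∈ (Finset.Icc 1 n).filter (fun u => degIn g n u < 2*m), 1 := by
        rw [Finset.card_eq_sum_ones]
    _ ≤ ∑ u ∈ (Finset.Icc 1 n).filter (fun u => degIn g n u < 2*m), (2*m - degIn g n u) := by
        apply Finset.sum_le_sum
        intro u hu
        have := (Finset.mem_filter.1 hu).2; omega
    _ ≤ ∑ u ∈ Finset.Icc 1 n, (2*m - degIn g n u) :=
        Finset.sum_le_sum_of_subset (Finset.filter_subset _ _)
    _ = m*(m+1) := h2

lemma nbrs_subset_open {m n : ℕ} {g g' : SimpleGraph ℕ} (h : IsUAStep m n g g') :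
    nbrsIn g' (n+1) (n+1) ⊆ (Finset.Icc 1 n).filter (fun u => degIn g n u < 2*m) := by
  intro u hu
  have hadj : g'.Adj (n+1) u := (Finset.mem_filter.1 hu).2
  have := h.2.2.2 u hadj
  exact Finset.mem_filter.2 ⟨this.1, this.2⟩

lemma m_le_open_card {m n : ℕ} {g g' : SimpleGraph ℕ} (h : IsUAStep m n g g') :
    m ≤ ((Finset.Icc 1 n).filter (fun u => degIn g n u < 2*m)).card := by
  calc m = (nbrsIn g' (n+1) (n+1)).card := h.2.2.1.symm
    _ ≤ _ := Finset.card_le_card (nbrs_subset_open h)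

def goodF (m n : ℕ) : Finset (SimpleGraph ℕ) := (graphsOn n).filter (GoodG m n)

lemma mem_goodF {m n : ℕ} {g : SimpleGraph ℕ} : g ∈ goodF m n ↔ GoodG m n g := by
  constructor
  · exact fun h => (Finset.mem_filter.1 h).2
  · exact fun h => Finset.mem_filter.2 ⟨mem_graphsOn.2 h.1, h⟩

section Meas

variable {m : ℕ} {Ω : Type} [MeasurableSpace Ω] {P : Measure Ω} [IsProbabilityMeasure P]

lemma meas_inter_conull {A W : Set Ω} (hW : MeasurableSet W) (hW1 : P W = 1) :
    P (A ∩ W) = P A := by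
  apply le_antisymm (measure_mono Set.inter_subset_left)
  have h0 : P Wᶜ = 0 := by
    rw [measure_compl hW (measure_ne_top P W), hW1, measure_univ, tsub_self]
  calc P A ≤ P (A ∩ W) + P (A \ W) := measure_le_inter_add_diff P A W
    _ ≤ P (A ∩ W) + P Wᶜ := by
        gcongr
        exact fun x hx => hx.2
    _ = P (A ∩ W) := by rw [h0, add_zero]

lemma goodSet_eq (X : UAProcess m P) (n : ℕ) :
    {ω | GoodG m n (X.G n ω)} = ⋃ g ∈ goodF m n, {ω | X.G n ω = g} := by
  ext ω
  simp only [Set.mem_setOf_eq, Set.mem_iUnion]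
  constructor
  · intro h; exact ⟨X.G n ω, mem_goodF.2 h, rfl⟩
  · rintro ⟨g, hg, hEq⟩; rw [hEq]; exact mem_goodF.1 hg

lemma goodSet_meas (X : UAProcess m P) (n : ℕ) :
    MeasurableSet {ω | GoodG m n (X.G n ω)} := by
  rw [goodSet_eq]
  exact (goodF m n).measurableSet_biUnion (fun g _ => X.meas n g)

lemma goodSet_one (hm : 1 ≤ m) (X : UAProcess m P) (n : ℕ) (hn : m+1 ≤ n) :
    P {ω | GoodG m n (X.G n ω)} = 1 := by
  induction n, hn using Nat.le_induction with
  | base =>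
    apply le_antisymm prob_le_one
    calc (1:ℝ≥0∞) = P {ω | X.G (m+1) ω = completeOn (m+1)} := X.init.symm
      _ ≤ P {ω | GoodG m (m+1) (X.G (m+1) ω)} := by
          apply measure_mono
          intro ω hω
          simp only [Set.mem_setOf_eq] at hω ⊢
          rw [hω]
          exact goodG_complete m hm
  | succ n hn ih =>
    apply le_antisymm prob_le_one
    calc (1:ℝ≥0∞) = P {ω | IsUAStep m n (X.G n ω) (X.G (n+1) ω)} := (X.stepAdm n hn).symm
      _ = P ({ω | IsUAStep m n (X.G n ω) (X.G (n+1) ω)} ∩ {ω | GoodG m n (X.G n ω)}) :=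
          (meas_inter_conull (goodSet_meas X n) ih).symm
      _ ≤ P {ω | GoodG m (n+1) (X.G (n+1) ω)} := by
          apply measure_mono
          rintro ω ⟨h1, h2⟩
          exact goodG_step h2 h1

def PairsF (m n : ℕ) : Finset (SimpleGraph ℕ × SimpleGraph ℕ) :=
  ((goodF m n) ×ˢ (goodF m (n+1))).filter (fun p => IsUAStep m n p.1 p.2)

lemma mem_PairsF {m n : ℕ} {p : SimpleGraph ℕ × SimpleGraph ℕ} :
    p ∈ PairsF m n ↔ GoodG m n p.1 ∧ GoodG m (n+1) p.2 ∧ IsUAStep m n p.1 p.2 := by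
  simp only [PairsF, Finset.mem_filter, Finset.mem_product, mem_goodF]
  tauto

def Epair (X : UAProcess m P) (n : ℕ) (p : SimpleGraph ℕ × SimpleGraph ℕ) : Set Ω :=
  {ω | X.G n ω = p.1 ∧ X.G (n+1) ω = p.2}

lemma Epair_meas (X : UAProcess m P) (n : ℕ) (p : SimpleGraph ℕ × SimpleGraph ℕ) :
    MeasurableSet (Epair X n p) :=
  (X.meas n p.1).inter (X.meas (n+1) p.2)

lemma Wset_eq (X : UAProcess m P) (n : ℕ) :
    (⋃ p ∈ PairsF m n, Epair X n p)
      = {ω | IsUAStep m n (X.G n ω) (X.G (n+1) ω)}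
        ∩ ({ω | GoodG m n (X.G n ω)} ∩ {ω | GoodG m (n+1) (X.G (n+1) ω)}) := by
  ext ω
  simp only [Set.mem_iUnion, Set.mem_inter_iff, Set.mem_setOf_eq]
  constructor
  · rintro ⟨p, hp, h1, h2⟩
    rw [mem_PairsF] at hp
    rw [h1, h2]
    exact ⟨hp.2.2, hp.1, hp.2.1⟩
  · rintro ⟨h1, h2, h3⟩
    exact ⟨(X.G n ω, X.G (n+1) ω), mem_PairsF.2 ⟨h2, h3, h1⟩, rfl, rfl⟩

lemma Wset_meas (X : UAProcess m P) (n : ℕ) :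
    MeasurableSet (⋃ p ∈ PairsF m n, Epair X n p) :=
  (PairsF m n).measurableSet_biUnion (fun p _ => Epair_meas X n p)

lemma Wset_one (hm : 1 ≤ m) (X : UAProcess m P) (n : ℕ) (hn : m+1 ≤ n) :
    P (⋃ p ∈ PairsF m n, Epair X n p) = 1 := by
  rw [Wset_eq]
  have hin : P ({ω | GoodG m n (X.G n ω)} ∩ {ω | GoodG m (n+1) (X.G (n+1) ω)}) = 1 := by
    rw [meas_inter_conull (goodSet_meas X (n+1)) (goodSet_one hm X (n+1) (by omega))]
    exact goodSet_one hm X n hn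
  rw [meas_inter_conull ((goodSet_meas X n).inter (goodSet_meas X (n+1))) hin]
  exact X.stepAdm n hn

lemma Epair_disjoint (X : UAProcess m P) (n : ℕ) (s : Finset (SimpleGraph ℕ × SimpleGraph ℕ)) :
    (↑s : Set (SimpleGraph ℕ × SimpleGraph ℕ)).PairwiseDisjoint (Epair X n) := by
  intro p hp q hq hpq
  simp only [Function.onFun]
  rw [Set.disjoint_left]
  rintro ω ⟨ha1, ha2⟩ ⟨hb1, hb2⟩
  exact hpq (Prod.ext (ha1.symm.trans hb1) (ha2.symm.trans hb2))

lemma master (hm : 1 ≤ m) (X : UAProcess m P) {n : ℕ} (hn : m+1 ≤ n)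
    (φ : SimpleGraph ℕ × SimpleGraph ℕ → Prop) [DecidablePred φ] :
    P {ω | φ (X.G n ω, X.G (n+1) ω)}
      = ∑ p ∈ (PairsF m n).filter φ, P (Epair X n p) := by
  have hW1 := Wset_one hm X n hn
  have hWm := Wset_meas X n
  rw [← meas_inter_conull (A := {ω | φ (X.G n ω, X.G (n+1) ω)}) hWm hW1]
  have hEq : {ω | φ (X.G n ω, X.G (n+1) ω)} ∩ (⋃ p ∈ PairsF m n, Epair X n p)
      = ⋃ p ∈ (PairsF m n).filter φ, Epair X n p := by
    ext ω
    simp only [Set.mem_inter_iff, Set.mem_setOf_eq, Set.mem_iUnion, Finset.mem_filter]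
    constructor
    · rintro ⟨hφ, p, hp, hE⟩
      refine ⟨p, ⟨hp, ?_⟩, hE⟩
      have : p = (X.G n ω, X.G (n+1) ω) := Prod.ext hE.1.symm hE.2.symm
      rw [this]; exact hφ
    · rintro ⟨p, ⟨hp, hφ⟩, hE⟩
      constructor
      · have : (X.G n ω, X.G (n+1) ω) = p := Prod.ext hE.1 hE.2
        rw [this]; exact hφ
      · exact ⟨p, hp, hE⟩
  rw [hEq, measure_biUnion_finset (Epair_disjoint X n _) (fun p _ => Epair_meas X n p)]

end Meas

-- chunk 3: main estimates
section Main

variable {m : ℕ} {Ω : Type} [MeasurableSpace Ω] {P : Measure Ω} [IsProbabilityMeasure P]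

lemma sum_fiber {α β : Type} [DecidableEq β] (s : Finset α) (t : Finset β) (key : α → β)
    (f : α → ℝ≥0∞) (h : ∀ a ∈ s, key a ∈ t) :
    ∑ a ∈ s, f a = ∑ b ∈ t, ∑ a ∈ s.filter (fun a => key a = b), f a :=
  (Finset.sum_fiberwise_of_maps_to h f).symm

lemma sum_deg_eq (hm : 1 ≤ m) (X : UAProcess m P) {n : ℕ} (hn : m+1 ≤ n)
    (dd : SimpleGraph ℕ × SimpleGraph ℕ → ℕ) (c : ℕ → ℝ≥0∞) :
    ∑ k ∈ Finset.range (2*m), c k * P {ω | dd (X.G n ω, X.G (n+1) ω) = k}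
    = ∑ p ∈ (PairsF m n).filter (fun p => dd p < 2*m),
        c (dd p) * P (Epair X n p) := by
  have h1 : ∀ k ∈ Finset.range (2*m),
      c k * P {ω | dd (X.G n ω, X.G (n+1) ω) = k}
      = ∑ p ∈ ((PairsF m n).filter (fun p => dd p < 2*m)).filter (fun p => dd p = k),
          c (dd p) * P (Epair X n p) := by
    intro k hk
    have hk2 : k < 2*m := Finset.mem_range.1 hk
    have h0 : P {ω | dd (X.G n ω, X.G (n+1) ω) = k}
        = ∑ p ∈ (PairsF m n).filter (fun p => dd p = k), P (Epair X n p) :=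
      master hm X hn (fun p => dd p = k)
    rw [h0, Finset.mul_sum]
    have hidx : (PairsF m n).filter (fun p => dd p = k)
        = ((PairsF m n).filter (fun p => dd p < 2*m)).filter (fun p => dd p = k) := by
      ext p
      simp only [Finset.filter_filter, Finset.mem_filter]
      constructor
      · rintro ⟨h1, h2⟩; exact ⟨h1, by omega, h2⟩
      · rintro ⟨h1, _, h3⟩; exact ⟨h1, h3⟩
    rw [hidx]
    apply Finset.sum_congr rfl
    intro p hp
    rw [(Finset.mem_filter.1 hp).2]
  rw [Finset.sum_congr rfl h1]
  exact Finset.sum_fiberwise_of_maps_to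
    (fun p hp => Finset.mem_range.2 ((Finset.mem_filter.1 hp).2)) _

lemma F_eq_sum_g (hm : 1 ≤ m) (X : UAProcess m P) {n : ℕ} (v : ℕ) (hn : m+1 ≤ n) :
    ∑ k ∈ Finset.range (2*m), (2:ℝ≥0∞)^(2*m-k) * P {ω | degIn (X.G n ω) n v = k}
    = ∑ g ∈ (goodF m n).filter (fun g => degIn g n v < 2*m),
        (2:ℝ≥0∞)^(2*m - degIn g n v) * P {ω | X.G n ω = g} := by
  have h0 : ∑ k ∈ Finset.range (2*m), (2:ℝ≥0∞)^(2*m-k) * P {ω | degIn (X.G n ω) n v = k}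
      = ∑ p ∈ (PairsF m n).filter (fun p => degIn p.1 n v < 2*m),
          (2:ℝ≥0∞)^(2*m - degIn p.1 n v) * P (Epair X n p) :=
    sum_deg_eq hm X hn (fun p => degIn p.1 n v) (fun k => (2:ℝ≥0∞)^(2*m-k))
  rw [h0]
  rw [sum_fiber _ ((goodF m n).filter (fun g => degIn g n v < 2*m)) (fun p => p.1) _
    (fun p hp => Finset.mem_filter.2
      ⟨mem_goodF.2 (mem_PairsF.1 (Finset.mem_filter.1 hp).1).1,
        (Finset.mem_filter.1 hp).2⟩)]
  apply Finset.sum_congr rfl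
  intro g hg
  have hglt : degIn g n v < 2*m := (Finset.mem_filter.1 hg).2
  have hidx : ((PairsF m n).filter (fun p => degIn p.1 n v < 2*m)).filter (fun p => p.1 = g)
      = (PairsF m n).filter (fun p => p.1 = g) := by
    ext p
    simp only [Finset.filter_filter, Finset.mem_filter]
    constructor
    · rintro ⟨h1, _, h3⟩; exact ⟨h1, h3⟩
    · rintro ⟨h1, h2⟩; exact ⟨h1, by rw [h2]; exact hglt, h2⟩
  rw [hidx]
  have hP : P {ω | X.G n ω = g}
      = ∑ p ∈ (PairsF m n).filter (fun p => p.1 = g), P (Epair X n p) :=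
    master hm X hn (fun p => p.1 = g)
  rw [hP, Finset.mul_sum]
  apply Finset.sum_congr rfl
  intro p hp
  rw [(Finset.mem_filter.1 hp).2]

lemma per_g (hm : 1 ≤ m) (X : UAProcess m P) {n v : ℕ} (hn : m+1 ≤ n)
    (hv : v ∈ Finset.Icc 1 n) {g : SimpleGraph ℕ} (hg : g ∈ goodF m n) :
    ∑ p ∈ (PairsF m n).filter (fun p => degIn p.2 (n+1) v < 2*m ∧ p.1 = g),
        (2*(m:ℝ≥0∞)+2) * ((2:ℝ≥0∞)^(2*m - degIn p.2 (n+1) v) * P (Epair X n p))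
    ≤ if degIn g n v < 2*m then
        (2*(m:ℝ≥0∞)+1) * ((2:ℝ≥0∞)^(2*m - degIn g n v) * P {ω | X.G n ω = g})
      else 0 := by
  have hJstep : ∀ p ∈ (PairsF m n).filter
      (fun p => degIn p.2 (n+1) v < 2*m ∧ p.1 = g), IsUAStep m n g p.2 := by
    intro p hp
    have h1 := Finset.mem_filter.1 hp
    rw [← h1.2.2]
    exact (mem_PairsF.1 h1.1).2.2
  have hτadj : ∀ p2 : SimpleGraph ℕ,
      v ∈ nbrsIn p2 (n+1) (n+1) ↔ p2.Adj (n+1) v := by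
    intro p2
    unfold nbrsIn
    rw [Finset.mem_filter]
    constructor
    · exact fun h => h.2
    · intro h
      refine ⟨?_, h⟩
      have := Finset.mem_Icc.1 hv
      simp only [Finset.mem_Icc]
      omega
  by_cases hd : degIn g n v < 2*m
  swap
  · rw [if_neg hd]
    have hempty : (PairsF m n).filter (fun p => degIn p.2 (n+1) v < 2*m ∧ p.1 = g) = ∅ := by
      rw [Finset.filter_eq_empty_iff]
      intro p hp hcon
      have hstep : IsUAStep m n g p.2 := by
        rw [← hcon.2]
        exact (mem_PairsF.1 hp).2.2
      have hdd := degIn_step hstep hv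
      by_cases hadj : p.2.Adj (n+1) v
      · exact hd ((hstep.2.2.2 v hadj).2)
      · rw [if_neg hadj] at hdd
        have := hcon.1
        omega
    rw [hempty, Finset.sum_empty]
  rw [if_pos hd]
  by_cases hne : ((PairsF m n).filter (fun p => p.1 = g)).Nonempty
  swap
  · have hsub0 : (PairsF m n).filter (fun p => degIn p.2 (n+1) v < 2*m ∧ p.1 = g) = ∅ := by
      rw [Finset.filter_eq_empty_iff]
      intro p hp hcon
      exact hne ⟨p, Finset.mem_filter.2 ⟨hp, hcon.2⟩⟩
    rw [hsub0, Finset.sum_empty]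
    exact zero_le
  obtain ⟨p₀, hp₀⟩ := hne
  have hstep₀ : IsUAStep m n g p₀.2 := by
    have h1 := Finset.mem_filter.1 hp₀
    rw [← h1.2]
    exact (mem_PairsF.1 h1.1).2.2
  set O := (Finset.Icc 1 n).filter (fun u => degIn g n u < 2*m) with hO_def
  have hNm : m ≤ O.card := m_le_open_card hstep₀
  have hN2 : O.card ≤ m*(m+1) := open_card_le (mem_goodF.1 hg)
  have hC0 : 0 < (O.card).choose m := Nat.choose_pos hNm
  have hvO : v ∈ O := Finset.mem_filter.2 ⟨hv, hd⟩
  set q : ℝ≥0∞ := P {ω | X.G n ω = g} / (((O.card).choose m : ℕ) : ℝ≥0∞) with hq_def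
  -- per-S value
  have hqS : ∀ S ∈ O.powersetCard m,
      ∑ p ∈ (PairsF m n).filter (fun p => p.1 = g ∧ nbrsIn p.2 (n+1) (n+1) = S),
        P (Epair X n p) = q := by
    intro S hS
    rw [Finset.mem_powersetCard] at hS
    have h0 : P {ω | X.G n ω = g ∧ nbrsIn (X.G (n+1) ω) (n+1) (n+1) = S}
        = ∑ p ∈ (PairsF m n).filter (fun p => p.1 = g ∧ nbrsIn p.2 (n+1) (n+1) = S),
            P (Epair X n p) :=
      master hm X hn (fun p => p.1 = g ∧ nbrsIn p.2 (n+1) (n+1) = S)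
    rw [← h0]
    have h1 := X.stepUnif n hn g (mem_goodF.1 hg).1 S hS.2
      (fun u hu => Finset.mem_filter.1 (hS.1 hu))
    have hnum : numOpenSets m n g = (O.card).choose m := by rw [hO_def]; rfl
    rw [h1, hq_def, hnum]
  -- maps-to for the fibering by S
  have hmapsS : ∀ p ∈ PairsF m n, p.1 = g → nbrsIn p.2 (n+1) (n+1) ∈ O.powersetCard m := by
    intro p hp hpg
    have hstep : IsUAStep m n g p.2 := by
      rw [← hpg]; exact (mem_PairsF.1 hp).2.2
    exact Finset.mem_powersetCard.2 ⟨nbrs_subset_open hstep, hstep.2.2.1⟩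
  -- A
  have hA : ∑ p ∈ (PairsF m n).filter (fun p => p.1 = g ∧ v ∈ nbrsIn p.2 (n+1) (n+1)),
      P (Epair X n p)
      = ((((O.powersetCard m).filter (fun S => v ∈ S)).card : ℕ) : ℝ≥0∞) * q := by
    rw [sum_fiber _ ((O.powersetCard m).filter (fun S => v ∈ S))
      (fun p => nbrsIn p.2 (n+1) (n+1)) _ ?_]
    swap
    · intro p hp
      have h1 := Finset.mem_filter.1 hp
      exact Finset.mem_filter.2 ⟨hmapsS p h1.1 h1.2.1, h1.2.2⟩
    have hcongr : ∀ S ∈ (O.powersetCard m).filter (fun S => v ∈ S),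
        ∑ p ∈ ((PairsF m n).filter
            (fun p => p.1 = g ∧ v ∈ nbrsIn p.2 (n+1) (n+1))).filter
            (fun p => nbrsIn p.2 (n+1) (n+1) = S),
          P (Epair X n p) = q := by
      intro S hS
      have hSmem := Finset.mem_filter.1 hS
      have hidx : ((PairsF m n).filter
          (fun p => p.1 = g ∧ v ∈ nbrsIn p.2 (n+1) (n+1))).filter
          (fun p => nbrsIn p.2 (n+1) (n+1) = S)
          = (PairsF m n).filter (fun p => p.1 = g ∧ nbrsIn p.2 (n+1) (n+1) = S) := by
        ext p
        simp only [Finset.filter_filter, Finset.mem_filter]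
        constructor
        · rintro ⟨h1, ⟨h2, _⟩, h4⟩; exact ⟨h1, h2, h4⟩
        · rintro ⟨h1, h2, h3⟩; exact ⟨h1, ⟨h2, by rw [h3]; exact hSmem.2⟩, h3⟩
      rw [hidx]
      exact hqS S hSmem.1
    rw [Finset.sum_congr rfl hcongr, Finset.sum_const, nsmul_eq_mul]
  -- B
  have hB : ∑ p ∈ (PairsF m n).filter (fun p => p.1 = g ∧ v ∉ nbrsIn p.2 (n+1) (n+1)),
      P (Epair X n p)
      = ((((O.powersetCard m).filter (fun S => v ∉ S)).card : ℕ) : ℝ≥0∞) * q := by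
    rw [sum_fiber _ ((O.powersetCard m).filter (fun S => v ∉ S))
      (fun p => nbrsIn p.2 (n+1) (n+1)) _ ?_]
    swap
    · intro p hp
      have h1 := Finset.mem_filter.1 hp
      exact Finset.mem_filter.2 ⟨hmapsS p h1.1 h1.2.1, h1.2.2⟩
    have hcongr : ∀ S ∈ (O.powersetCard m).filter (fun S => v ∉ S),
        ∑ p ∈ ((PairsF m n).filter
            (fun p => p.1 = g ∧ v ∉ nbrsIn p.2 (n+1) (n+1))).filter
            (fun p => nbrsIn p.2 (n+1) (n+1) = S),
          P (Epair X n p) = q := by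
      intro S hS
      have hSmem := Finset.mem_filter.1 hS
      have hidx : ((PairsF m n).filter
          (fun p => p.1 = g ∧ v ∉ nbrsIn p.2 (n+1) (n+1))).filter
          (fun p => nbrsIn p.2 (n+1) (n+1) = S)
          = (PairsF m n).filter (fun p => p.1 = g ∧ nbrsIn p.2 (n+1) (n+1) = S) := by
        ext p
        simp only [Finset.filter_filter, Finset.mem_filter]
        constructor
        · rintro ⟨h1, ⟨h2, _⟩, h4⟩; exact ⟨h1, h2, h4⟩
        · rintro ⟨h1, h2, h3⟩; exact ⟨h1, ⟨h2, by rw [h3]; exact hSmem.2⟩, h3⟩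
      rw [hidx]
      exact hqS S hSmem.1
    rw [Finset.sum_congr rfl hcongr, Finset.sum_const, nsmul_eq_mul]
  -- cards
  set a := ((O.powersetCard m).filter (fun S => v ∈ S)).card with ha_def
  set b := ((O.powersetCard m).filter (fun S => v ∉ S)).card with hb_def
  have hab : a + b = (O.card).choose m := by
    rw [ha_def, hb_def, Finset.card_filter_add_card_filter_not,
      Finset.card_powersetCard]
  have hbval : b = (O.card - 1).choose m := by
    rw [hb_def]
    have hEq : (O.powersetCard m).filter (fun S => v ∉ S) = (O.erase v).powersetCard m := by
      ext S
      simp only [Finset.mem_filter, Finset.mem_powersetCard, Finset.subset_erase]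
      tauto
    rw [hEq, Finset.card_powersetCard, Finset.card_erase_of_mem hvO]
  have hN1 : O.card = (O.card - 1) + 1 := by omega
  have hm1 : m = (m - 1) + 1 := by omega
  have hpascal : (O.card).choose m = (O.card - 1).choose (m-1) + (O.card - 1).choose m := by
    calc (O.card).choose m = ((O.card - 1)+1).choose ((m-1)+1) := by rw [← hN1, ← hm1]
      _ = (O.card-1).choose (m-1) + (O.card-1).choose ((m-1)+1) := Nat.choose_succ_succ' _ _
      _ = (O.card-1).choose (m-1) + (O.card-1).choose m := by rw [← hm1]
  have haval : a = (O.card - 1).choose (m-1) := by omega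
  have hmul : O.card * a = (O.card).choose m * m := by
    have hmc := Nat.add_one_mul_choose_eq (O.card-1) (m-1)
    rw [← hN1, ← hm1] at hmc
    rw [haval, hmc]
  have hkey : b ≤ m * a := by
    have h5 : m * a + m * b = O.card * a := by
      calc m*a + m*b = m*(a+b) := by ring
        _ = m * ((O.card).choose m) := by rw [hab]
        _ = (O.card).choose m * m := by ring
        _ = O.card * a := hmul.symm
    have h6 : O.card * a ≤ (m*(m+1)) * a := Nat.mul_le_mul_right a hN2
    have h8 : (m*(m+1)) * a = m*a + m*(m*a) := by ring
    have h7 : m * b ≤ m * (m * a) := by omega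
    exact Nat.le_of_mul_le_mul_left h7 (by omega)
  -- the natural-number inequality
  have hnat : (2*m+2)*a + (2*m+2)*(2*b) ≤ 2*(2*m+1)*((O.card).choose m) := by
    rw [← hab]
    nlinarith [hkey]
  have hnatE : (2*(m:ℝ≥0∞)+2) * (a:ℕ) + (2*(m:ℝ≥0∞)+2) * (2*(b:ℕ))
      ≤ 2*(2*(m:ℝ≥0∞)+1) * (((O.card).choose m : ℕ) : ℝ≥0∞) := by
    exact_mod_cast hnat
  -- assemble
  set d := degIn g n v with hd_val
  set J := (PairsF m n).filter (fun p => degIn p.2 (n+1) v < 2*m ∧ p.1 = g) with hJ_def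
  set f : SimpleGraph ℕ × SimpleGraph ℕ → ℝ≥0∞ :=
    fun p => (2*(m:ℝ≥0∞)+2) * ((2:ℝ≥0∞)^(2*m - degIn p.2 (n+1) v) * P (Epair X n p))
    with hf_def
  have hone : ∀ p ∈ J.filter (fun p => v ∈ nbrsIn p.2 (n+1) (n+1)),
      f p = ((2*(m:ℝ≥0∞)+2) * (2:ℝ≥0∞)^(2*m - (d+1))) * P (Epair X n p) := by
    intro p hp
    have h1 := Finset.mem_filter.1 hp
    have hstep : IsUAStep m n g p.2 := hJstep p h1.1
    have hadj : p.2.Adj (n+1) v := (hτadj p.2).1 h1.2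
    have hdd : degIn p.2 (n+1) v = d + 1 := by
      rw [degIn_step hstep hv, if_pos hadj]
    rw [hf_def]
    simp only []
    rw [hdd]
    ring
  have htwo : ∀ p ∈ J.filter (fun p => v ∉ nbrsIn p.2 (n+1) (n+1)),
      f p = ((2*(m:ℝ≥0∞)+2) * (2:ℝ≥0∞)^(2*m - d)) * P (Epair X n p) := by
    intro p hp
    have h1 := Finset.mem_filter.1 hp
    have hstep : IsUAStep m n g p.2 := hJstep p h1.1
    have hadj : ¬ p.2.Adj (n+1) v := fun hc => h1.2 ((hτadj p.2).2 hc)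
    have hdd : degIn p.2 (n+1) v = d := by
      rw [degIn_step hstep hv, if_neg hadj]
      omega
    rw [hf_def]
    simp only []
    rw [hdd]
    ring
  have hsubA : J.filter (fun p => v ∈ nbrsIn p.2 (n+1) (n+1))
      ⊆ (PairsF m n).filter (fun p => p.1 = g ∧ v ∈ nbrsIn p.2 (n+1) (n+1)) := by
    intro p hp
    have h1 := Finset.mem_filter.1 hp
    have h2 := Finset.mem_filter.1 h1.1
    exact Finset.mem_filter.2 ⟨h2.1, h2.2.2, h1.2⟩
  have hsubB : J.filter (fun p => v ∉ nbrsIn p.2 (n+1) (n+1))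
      ⊆ (PairsF m n).filter (fun p => p.1 = g ∧ v ∉ nbrsIn p.2 (n+1) (n+1)) := by
    intro p hp
    have h1 := Finset.mem_filter.1 hp
    have h2 := Finset.mem_filter.1 h1.1
    exact Finset.mem_filter.2 ⟨h2.1, h2.2.2, h1.2⟩
  have hbound1 : ∑ p ∈ J.filter (fun p => v ∈ nbrsIn p.2 (n+1) (n+1)), f p
      ≤ ((2*(m:ℝ≥0∞)+2) * (2:ℝ≥0∞)^(2*m - (d+1))) * ((a:ℕ) * q) := by
    rw [Finset.sum_congr rfl hone, ← Finset.mul_sum]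
    apply mul_le_mul_right
    rw [← hA]
    exact Finset.sum_le_sum_of_subset hsubA
  have hbound2 : ∑ p ∈ J.filter (fun p => v ∉ nbrsIn p.2 (n+1) (n+1)), f p
      ≤ ((2*(m:ℝ≥0∞)+2) * (2:ℝ≥0∞)^(2*m - d)) * ((b:ℕ) * q) := by
    rw [Finset.sum_congr rfl htwo, ← Finset.mul_sum]
    apply mul_le_mul_right
    rw [← hB]
    exact Finset.sum_le_sum_of_subset hsubB
  have hPg : P {ω | X.G n ω = g} = (((O.card).choose m : ℕ) : ℝ≥0∞) * q := by
    rw [hq_def, ENNReal.mul_div_cancel (by exact_mod_cast hC0.ne') (ENNReal.natCast_ne_top _)]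
  have hpow : (2:ℝ≥0∞)^(2*m - d) = (2:ℝ≥0∞)^(2*m - (d+1)) * 2 := by
    rw [← pow_succ]
    congr 1
    omega
  calc ∑ p ∈ J, f p
      = ∑ p ∈ J.filter (fun p => v ∈ nbrsIn p.2 (n+1) (n+1)), f p
        + ∑ p ∈ J.filter (fun p => v ∉ nbrsIn p.2 (n+1) (n+1)), f p :=
        (Finset.sum_filter_add_sum_filter_not J _ f).symm
    _ ≤ ((2*(m:ℝ≥0∞)+2) * (2:ℝ≥0∞)^(2*m - (d+1))) * ((a:ℕ) * q)
        + ((2*(m:ℝ≥0∞)+2) * (2:ℝ≥0∞)^(2*m - d)) * ((b:ℕ) * q) :=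
        add_le_add hbound1 hbound2
    _ = ((2*(m:ℝ≥0∞)+2) * (a:ℕ) + (2*(m:ℝ≥0∞)+2) * (2*(b:ℕ)))
        * ((2:ℝ≥0∞)^(2*m - (d+1)) * q) := by
        rw [hpow]; ring
    _ ≤ (2*(2*(m:ℝ≥0∞)+1) * (((O.card).choose m : ℕ) : ℝ≥0∞))
        * ((2:ℝ≥0∞)^(2*m - (d+1)) * q) := mul_le_mul_left hnatE _
    _ = (2*(m:ℝ≥0∞)+1) * ((2:ℝ≥0∞)^(2*m - d) * P {ω | X.G n ω = g}) := by
        rw [hPg, hpow]; ring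

end Main

-- chunk 4
section Main2

variable {m : ℕ} {Ω : Type} [MeasurableSpace Ω] {P : Measure Ω} [IsProbabilityMeasure P]

lemma step_main (hm : 1 ≤ m) (X : UAProcess m P) {n v : ℕ} (hn : m+1 ≤ n)
    (hv : v ∈ Finset.Icc 1 n) :
    (2*(m:ℝ≥0∞)+2) * ∑ k ∈ Finset.range (2*m),
        (2:ℝ≥0∞)^(2*m-k) * P {ω | degIn (X.G (n+1) ω) (n+1) v = k}
    ≤ (2*(m:ℝ≥0∞)+1) * ∑ k ∈ Finset.range (2*m),
        (2:ℝ≥0∞)^(2*m-k) * P {ω | degIn (X.G n ω) n v = k} := by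
  have h0 : ∑ k ∈ Finset.range (2*m),
      (2:ℝ≥0∞)^(2*m-k) * P {ω | degIn (X.G (n+1) ω) (n+1) v = k}
      = ∑ p ∈ (PairsF m n).filter (fun p => degIn p.2 (n+1) v < 2*m),
          (2:ℝ≥0∞)^(2*m - degIn p.2 (n+1) v) * P (Epair X n p) :=
    sum_deg_eq hm X hn (fun p => degIn p.2 (n+1) v) (fun k => (2:ℝ≥0∞)^(2*m-k))
  rw [h0, F_eq_sum_g hm X v hn, Finset.mul_sum, Finset.mul_sum]
  rw [sum_fiber ((PairsF m n).filter (fun p => degIn p.2 (n+1) v < 2*m)) (goodF m n)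
    (fun p => p.1) _ (fun p hp => mem_goodF.2 (mem_PairsF.1 (Finset.mem_filter.1 hp).1).1)]
  have hR : ∑ g ∈ (goodF m n).filter (fun g => degIn g n v < 2*m),
      (2*(m:ℝ≥0∞)+1) * ((2:ℝ≥0∞)^(2*m - degIn g n v) * P {ω | X.G n ω = g})
      = ∑ g ∈ goodF m n, if degIn g n v < 2*m then
          (2*(m:ℝ≥0∞)+1) * ((2:ℝ≥0∞)^(2*m - degIn g n v) * P {ω | X.G n ω = g})
        else 0 := Finset.sum_filter _ _
  rw [hR]
  apply Finset.sum_le_sum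
  intro g hg
  have hidx : ((PairsF m n).filter (fun p => degIn p.2 (n+1) v < 2*m)).filter
      (fun p => p.1 = g)
      = (PairsF m n).filter (fun p => degIn p.2 (n+1) v < 2*m ∧ p.1 = g) := by
    rw [Finset.filter_filter]
  rw [hidx]
  exact per_g hm X hn hv hg

lemma sum_P_deg_le_one (hm : 1 ≤ m) (X : UAProcess m P) {n : ℕ} (hn : m+1 ≤ n) (v : ℕ) :
    ∑ k ∈ Finset.range (2*m), P {ω | degIn (X.G n ω) n v = k} ≤ 1 := by
  have h0 : ∑ k ∈ Finset.range (2*m),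
      (1:ℝ≥0∞) * P {ω | degIn (X.G n ω) n v = k}
      = ∑ p ∈ (PairsF m n).filter (fun p => degIn p.1 n v < 2*m),
          (1:ℝ≥0∞) * P (Epair X n p) :=
    sum_deg_eq hm X hn (fun p => degIn p.1 n v) (fun _ => 1)
  simp only [one_mul] at h0
  rw [h0]
  have hall : ∑ p ∈ PairsF m n, P (Epair X n p) = 1 := by
    have h := master hm X hn (fun _ => True)
    simp only [Finset.filter_true] at h
    rw [← h]
    have : {ω : Ω | True} = Set.univ := Set.setOf_true
    rw [this, measure_univ]
  calc ∑ p ∈ (PairsF m n).filter (fun p => degIn p.1 n v < 2*m), P (Epair X n p)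
      ≤ ∑ p ∈ PairsF m n, P (Epair X n p) :=
        Finset.sum_le_sum_of_subset (Finset.filter_subset _ _)
    _ = 1 := hall

lemma P_open_le_F (hm : 1 ≤ m) (X : UAProcess m P) {n : ℕ} (hn : m+1 ≤ n) (v : ℕ) :
    P {ω | degIn (X.G n ω) n v < 2*m}
    ≤ ∑ k ∈ Finset.range (2*m), (2:ℝ≥0∞)^(2*m-k) * P {ω | degIn (X.G n ω) n v = k} := by
  have h0 : P {ω | degIn (X.G n ω) n v < 2*m}
      = ∑ p ∈ (PairsF m n).filter (fun p => degIn p.1 n v < 2*m), P (Epair X n p) :=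
    master hm X hn (fun p => degIn p.1 n v < 2*m)
  have h1 : ∑ k ∈ Finset.range (2*m),
      (2:ℝ≥0∞)^(2*m-k) * P {ω | degIn (X.G n ω) n v = k}
      = ∑ p ∈ (PairsF m n).filter (fun p => degIn p.1 n v < 2*m),
          (2:ℝ≥0∞)^(2*m - degIn p.1 n v) * P (Epair X n p) :=
    sum_deg_eq hm X hn (fun p => degIn p.1 n v) (fun k => (2:ℝ≥0∞)^(2*m-k))
  rw [h0, h1]
  apply Finset.sum_le_sum
  intro p hp
  conv_lhs => rw [← one_mul (P (Epair X n p))]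
  apply mul_le_mul_left
  calc (1:ℝ≥0∞) = 1^(2*m - degIn p.1 n v) := (one_pow _).symm
    _ ≤ 2^(2*m - degIn p.1 n v) := pow_le_pow_left' (by norm_num) _

lemma F_le_base (hm : 1 ≤ m) (X : UAProcess m P) {n : ℕ} (hn : m+1 ≤ n) (v : ℕ) :
    ∑ k ∈ Finset.range (2*m), (2:ℝ≥0∞)^(2*m-k) * P {ω | degIn (X.G n ω) n v = k}
    ≤ 2^(2*m) := by
  calc ∑ k ∈ Finset.range (2*m), (2:ℝ≥0∞)^(2*m-k) * P {ω | degIn (X.G n ω) n v = k}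
      ≤ ∑ k ∈ Finset.range (2*m), (2:ℝ≥0∞)^(2*m) * P {ω | degIn (X.G n ω) n v = k} := by
        apply Finset.sum_le_sum
        intro k hk
        exact mul_le_mul_left (pow_le_pow_right' (by norm_num) (Nat.sub_le _ _)) _
    _ = (2:ℝ≥0∞)^(2*m) * ∑ k ∈ Finset.range (2*m), P {ω | degIn (X.G n ω) n v = k} := by
        rw [Finset.mul_sum]
    _ ≤ (2:ℝ≥0∞)^(2*m) * 1 := mul_le_mul_right (sum_P_deg_le_one hm X hn v) _
    _ = 2^(2*m) := mul_one _

lemma F_decay (hm : 1 ≤ m) (X : UAProcess m P) {v n0 : ℕ} (hn0 : m+1 ≤ n0)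
    (hv : v ∈ Finset.Icc 1 n0) (j : ℕ) :
    ∑ k ∈ Finset.range (2*m),
        (2:ℝ≥0∞)^(2*m-k) * P {ω | degIn (X.G (n0+j) ω) (n0+j) v = k}
    ≤ ((2*(m:ℝ≥0∞)+1)/(2*(m:ℝ≥0∞)+2))^j * 2^(2*m) := by
  induction j with
  | zero => simpa using F_le_base hm X hn0 v
  | succ j ih =>
    have hvj : v ∈ Finset.Icc 1 (n0+j) := by
      simp only [Finset.mem_Icc] at hv ⊢; omega
    have hstep := step_main hm X (n := n0+j) (by omega) hvj
    have hc2 : (2*(m:ℝ≥0∞)+2) ≠ 0 := by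
      simp
    have hct : (2*(m:ℝ≥0∞)+2) ≠ ∞ := by
      apply ENNReal.add_ne_top.2
      constructor
      · exact ENNReal.mul_ne_top (by simp) (ENNReal.natCast_ne_top m)
      · simp
    calc ∑ k ∈ Finset.range (2*m),
        (2:ℝ≥0∞)^(2*m-k) * P {ω | degIn (X.G (n0+(j+1)) ω) (n0+(j+1)) v = k}
        = ((2*(m:ℝ≥0∞)+2)⁻¹ * (2*(m:ℝ≥0∞)+2)) * ∑ k ∈ Finset.range (2*m),
            (2:ℝ≥0∞)^(2*m-k) * P {ω | degIn (X.G ((n0+j)+1) ω) ((n0+j)+1) v = k} := by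
          rw [ENNReal.inv_mul_cancel hc2 hct, one_mul]
          rfl
      _ = (2*(m:ℝ≥0∞)+2)⁻¹ * ((2*(m:ℝ≥0∞)+2) * ∑ k ∈ Finset.range (2*m),
            (2:ℝ≥0∞)^(2*m-k) * P {ω | degIn (X.G ((n0+j)+1) ω) ((n0+j)+1) v = k}) := by
          rw [mul_assoc]
      _ ≤ (2*(m:ℝ≥0∞)+2)⁻¹ * ((2*(m:ℝ≥0∞)+1) * ∑ k ∈ Finset.range (2*m),
            (2:ℝ≥0∞)^(2*m-k) * P {ω | degIn (X.G (n0+j) ω) (n0+j) v = k}) :=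
          mul_le_mul_right hstep _
      _ = ((2*(m:ℝ≥0∞)+1)/(2*(m:ℝ≥0∞)+2)) * ∑ k ∈ Finset.range (2*m),
            (2:ℝ≥0∞)^(2*m-k) * P {ω | degIn (X.G (n0+j) ω) (n0+j) v = k} := by
          rw [ENNReal.div_eq_inv_mul, mul_assoc]
      _ ≤ ((2*(m:ℝ≥0∞)+1)/(2*(m:ℝ≥0∞)+2)) * (((2*(m:ℝ≥0∞)+1)/(2*(m:ℝ≥0∞)+2))^j * 2^(2*m)) :=
          mul_le_mul_right ih _
      _ = ((2*(m:ℝ≥0∞)+1)/(2*(m:ℝ≥0∞)+2))^(j+1) * 2^(2*m) := by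
          rw [pow_succ]; ring

end Main2

/-- For every integer `m > 1` there are constants `C, c > 0` (depending only
on `m`) such that in the random uniform attachment graph process with degree cap `d = 2m`,
for every vertex `v` and every `n ≥ v`, the probability that `v` has degree `< 2m` in `G n`
is at most `C · exp(−c(n−v))`. -/
theorem uniform_attachment_open_probability_exponential_decay (m : ℕ) (hm : 1 < m) :
    ∃ C c : ℝ, 0 < C ∧ 0 < c ∧
      ∀ (Ω : Type) [MeasurableSpace Ω] (P : Measure Ω) [IsProbabilityMeasure P]
        (X : UAProcess m P) (v n : ℕ), 1 ≤ v → v ≤ n → m + 1 ≤ n →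
        P {ω | degIn (X.G n ω) n v < 2*m} ≤
          ENNReal.ofReal (C * Real.exp (-(c * ((n : ℝ) - (v : ℝ))))) := by
  have hm1 : 1 ≤ m := le_of_lt hm
  set r : ℝ := (2*(m:ℝ)+1)/(2*(m:ℝ)+2) with hr_def
  have hr0 : 0 < r := by positivity
  have hr1 : r < 1 := by
    rw [hr_def, div_lt_one (by positivity)]
    linarith
  refine ⟨2^(2*m) / r^m, -Real.log r, by positivity,
    by simpa using neg_pos.2 (Real.log_neg hr0 hr1), ?_⟩
  intro Ω _ P _ X v n hv1 hvn hn
  set n0 := max (m+1) v with hn0_def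
  have hn0n : n0 ≤ n := max_le hn hvn
  have hn0m : m+1 ≤ n0 := le_max_left _ _
  have hn0v : n0 ≤ v + m := by
    apply max_le <;> omega
  have hvn0 : v ∈ Finset.Icc 1 n0 := by
    simp only [Finset.mem_Icc]
    exact ⟨hv1, le_max_right _ _⟩
  have hvnIcc : v ∈ Finset.Icc 1 n := by
    simp only [Finset.mem_Icc]; exact ⟨hv1, hvn⟩
  have hdecay := F_decay hm1 X hn0m hvn0 (n - n0)
  rw [show n0 + (n - n0) = n from by omega] at hdecay
  have hopen := P_open_le_F hm1 X hn v
  -- convert the ENNReal bound to ofReal form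
  have hqE : ((2*(m:ℝ≥0∞)+1)/(2*(m:ℝ≥0∞)+2)) = ENNReal.ofReal r := by
    rw [hr_def, ENNReal.ofReal_div_of_pos (by positivity)]
    congr 1
    · rw [show (2*(m:ℝ)+1) = ((2*m+1 : ℕ) : ℝ) by push_cast; ring, ENNReal.ofReal_natCast]
      push_cast
      ring
    · rw [show (2*(m:ℝ)+2) = ((2*m+2 : ℕ) : ℝ) by push_cast; ring, ENNReal.ofReal_natCast]
      push_cast
      ring
  have htwo : (2:ℝ≥0∞) = ENNReal.ofReal 2 := (ENNReal.ofReal_ofNat 2).symm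
  have hconv : ((2*(m:ℝ≥0∞)+1)/(2*(m:ℝ≥0∞)+2))^(n-n0) * 2^(2*m)
      = ENNReal.ofReal (r^(n-n0) * 2^(2*m)) := by
    rw [hqE, htwo, ← ENNReal.ofReal_pow (le_of_lt hr0), ← ENNReal.ofReal_pow (by norm_num),
      ← ENNReal.ofReal_mul (by positivity)]
  have hreal : r^(n-n0) * 2^(2*m)
      ≤ (2^(2*m) / r^m) * Real.exp (-(-Real.log r * ((n:ℝ) - (v:ℝ)))) := by
    have ht : (n:ℝ) - (v:ℝ) = ((n - v : ℕ) : ℝ) := by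
      rw [Nat.cast_sub hvn]
    have hexp : -(-Real.log r * ((n:ℝ) - (v:ℝ))) = ((n-v:ℕ):ℝ) * Real.log r := by
      rw [ht]; ring
    rw [hexp, Real.exp_nat_mul, Real.exp_log hr0]
    have key : r^(n-n0) * r^m ≤ r^(n-v) := by
      rw [← pow_add]
      apply pow_le_pow_of_le_one (le_of_lt hr0) (le_of_lt hr1)
      omega
    rw [div_mul_eq_mul_div, le_div_iff₀ (by positivity : (0:ℝ) < r^m)]
    calc r^(n-n0) * 2^(2*m) * r^m = (r^(n-n0) * r^m) * 2^(2*m) := by ring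
      _ ≤ r^(n-v) * 2^(2*m) := mul_le_mul_of_nonneg_right key (by positivity)
      _ = 2^(2*m) * r^(n-v) := by ring
  calc P {ω | degIn (X.G n ω) n v < 2*m}
      ≤ ∑ k ∈ Finset.range (2*m), (2:ℝ≥0∞)^(2*m-k) * P {ω | degIn (X.G n ω) n v = k} :=
        hopen
    _ ≤ ((2*(m:ℝ≥0∞)+1)/(2*(m:ℝ≥0∞)+2))^(n-n0) * 2^(2*m) := hdecay
    _ = ENNReal.ofReal (r^(n-n0) * 2^(2*m)) := hconv
    _ ≤ ENNReal.ofReal ((2^(2*m) / r^m) * Real.exp (-(-Real.log r * ((n:ℝ) - (v:ℝ))))) :=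
        ENNReal.ofReal_le_ofReal hreal
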